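/- The maximum distance between a point of the unit trapezoid and a point of its mirror image across the line containing one of its legs equals 2√3. -/

import Mathlib

open Real

noncomputable def pt (x y : ℝ) : EuclideanSpace ℝ (Fin 2) := WithLp.toLp 2 ![x, y]

noncomputable def unitTrapezoid : Set (EuclideanSpace ℝ (Fin 2)) :=
  convexHull ℝ {pt 0 0, pt 2 0, pt (3/2) (sqrt 3 / 2), pt (1/2) (sqrt 3 / 2)}

/-- The reflection of the unit trapezoid across the line containing the leg through
`(2,0)` and `(3/2, √3/2)`: the vertices `(0,0)`, `(2,0)`, `(3/2,√3/2)`, `(1/2,√3/2)`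
map to `(3,√3)`, `(2,0)`, `(3/2,√3/2)`, `(2,√3)` respectively. -/
noncomputable def unitTrapezoidLegRefl : Set (EuclideanSpace ℝ (Fin 2)) :=
  convexHull ℝ {pt 3 (sqrt 3), pt 2 0, pt (3/2) (sqrt 3 / 2), pt 2 (sqrt 3)}

lemma dist_pt (a b c d : ℝ) : dist (pt a b) (pt c d) = sqrt ((a - c)^2 + (b - d)^2) := by
  rw [EuclideanSpace.dist_eq]
  congr 1
  simp [pt, Fin.sum_univ_two, sq, Real.dist_eq, abs_mul_abs_self]

lemma dist_pt_le (a b c d : ℝ) (h : (a - c)^2 + (b - d)^2 ≤ 12) :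
    dist (pt a b) (pt c d) ≤ 2 * sqrt 3 := by
  rw [dist_pt]
  have : (2 : ℝ) * sqrt 3 = sqrt 12 := by
    rw [show (12:ℝ) = 2^2 * 3 by norm_num, sqrt_mul (by positivity), sqrt_sq (by norm_num)]
  rw [this]
  exact sqrt_le_sqrt h

theorem max_dist_trapezoid_leg_refl :
    IsGreatest {d : ℝ | ∃ x ∈ unitTrapezoid, ∃ y ∈ unitTrapezoidLegRefl, d = dist x y}
      (2 * sqrt 3) := by
  have hs : sqrt 3 ^ 2 = 3 := sq_sqrt (by norm_num)
  constructor
  · refine ⟨pt 0 0, subset_convexHull ℝ _ (by simp), pt 3 (sqrt 3),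
      subset_convexHull ℝ _ (by simp), ?_⟩
    rw [dist_pt]
    rw [show ((0:ℝ) - 3)^2 + (0 - sqrt 3)^2 = 12 by nlinarith]
    rw [show (12:ℝ) = 2^2 * 3 by norm_num, sqrt_mul (by positivity), sqrt_sq (by norm_num)]
  · rintro d ⟨x, hx, y, hy, rfl⟩
    obtain ⟨x', hx', y', hy', h⟩ := convexHull_exists_dist_ge2 hx hy
    refine h.trans ?_
    have h3 : (0:ℝ) ≤ sqrt 3 := sqrt_nonneg 3
    simp only [Set.mem_insert_iff, Set.mem_singleton_iff] at hx' hy'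
    rcases hx' with rfl | rfl | rfl | rfl <;> rcases hy' with rfl | rfl | rfl | rfl <;>
      apply dist_pt_le <;> nlinarith
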